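/- Let γ ∈ (0,1) and b* = 1/(1-γ), and let c = γ^{γ/(1-γ)}. For every p ∈ [c, 1), we have [ p · γb*/(γb* + 1 - p) ]^γ > p; equivalently, p^{γ-1} · (γb*)^γ > (γb* + 1 - p)^γ. -/

import Mathlib

theorem pgss_strict_ineq (γ : ℝ) (hγ0 : 0 < γ) (hγ1 : γ < 1) :
    ∀ p : ℝ, p ∈ Set.Ico (γ ^ (γ / (1 - γ))) 1 →
      (p * (γ * (1 / (1 - γ))) / (γ * (1 / (1 - γ)) + 1 - p)) ^ γ > p ∧
      p ^ (γ - 1) * (γ * (1 / (1 - γ))) ^ γ > (γ * (1 / (1 - γ)) + 1 - p) ^ γ := by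
  intro p hp
  obtain ⟨hpc, hp1⟩ := hp
  have h1γ : (0:ℝ) < 1 - γ := by linarith
  set A : ℝ := γ * (1 / (1 - γ)) with hA
  have hA0 : 0 < A := by positivity
  have hp0 : 0 < p := lt_of_lt_of_le (Real.rpow_pos_of_pos hγ0 _) hpc
  have hAp : 0 < A + 1 - p := by nlinarith
  set t : ℝ := (A + 1 - p) / (p * A) with ht
  have ht1 : 1 < t := by
    rw [ht, lt_div_iff₀ (by positivity)]
    nlinarith
  have ht0 : 0 < t := lt_trans one_pos ht1
  have hb : t ^ γ < 1 + γ * (t - 1) := by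
    have := rpow_one_add_lt_one_add_mul_self (s := t - 1)
      (by linarith) (by linarith) hγ0 hγ1
    simpa using this
  have hid : p * (1 + γ * (t - 1)) = 1 := by
    have hγne : γ ≠ 0 := hγ0.ne'
    have h1γne : (1:ℝ) - γ ≠ 0 := h1γ.ne'
    have hpne : p ≠ 0 := hp0.ne'
    rw [ht, hA]
    field_simp
    ring_nf
  have hkey : p * t ^ γ < 1 := by
    calc p * t ^ γ < p * (1 + γ * (t - 1)) := by
          exact (mul_lt_mul_iff_right₀ hp0).mpr hb
      _ = 1 := hid
  have htpow : 0 < t ^ γ := Real.rpow_pos_of_pos ht0 _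
  constructor
  · have hinv : p * A / (A + 1 - p) = t⁻¹ := by
      rw [ht]; field_simp
    rw [hinv, Real.inv_rpow ht0.le]
    have h1 : t ^ γ * (t ^ γ)⁻¹ = 1 := mul_inv_cancel₀ htpow.ne'
    have h2 : 0 < (t ^ γ)⁻¹ := inv_pos.mpr htpow
    nlinarith
  · have hdiv : t ^ γ = (A + 1 - p) ^ γ / (p ^ γ * A ^ γ) := by
      rw [ht, Real.div_rpow hAp.le (by positivity), Real.mul_rpow hp0.le hA0.le]
    have hkey2 : p * ((A + 1 - p) ^ γ / (p ^ γ * A ^ γ)) < 1 := by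
      rw [← hdiv]; exact hkey
    have hpg : 0 < p ^ γ * A ^ γ := by
      have := Real.rpow_pos_of_pos hp0 γ
      have := Real.rpow_pos_of_pos hA0 γ
      positivity
    have h2 : p * (A + 1 - p) ^ γ < p ^ γ * A ^ γ := by
      rw [mul_div_assoc'] at hkey2
      exact (div_lt_one hpg).mp hkey2
    have hps : p ^ (γ - 1) = p ^ γ / p := by
      rw [Real.rpow_sub hp0, Real.rpow_one]
    rw [hps, div_mul_eq_mul_div, gt_iff_lt, lt_div_iff₀ hp0]
    linarith [h2]
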